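/- Let p be a prime and define f : ℤ → ℤ by f(n) = 1 - 2p·[p | n] + p²·[p² | n], where [a | n] is 1 if a divides n and 0 otherwise. Then f is periodic with period p², f does not vanish on all residues r with 1 < gcd(r, p²) < p², and ∑_{n=1}^∞ f(n)/n = 0. -/

import Mathlib

open Filter Topology

lemma bbw_aux_div_sum (d : ℕ) (N : ℕ) :
    ∑ n ∈ Finset.range N, (if (d : ℤ) ∣ ((n : ℤ) + 1) then (1 : ℝ) / (n + 1) else 0)
      = (1 / d) * ∑ i ∈ Finset.range (N / d), (1 : ℝ) / (i + 1) := by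
  induction N with
  | zero => simp
  | succ N ih =>
    rw [Finset.sum_range_succ, ih, Nat.succ_div]
    by_cases h : d ∣ N + 1
    · have h' : (d : ℤ) ∣ ((N : ℤ) + 1) := by exact_mod_cast Int.natCast_dvd_natCast.mpr h
      rw [if_pos h, if_pos h', Finset.sum_range_succ, mul_add]
      congr 1
      have h2 : N + 1 = d * (N / d + 1) := by
        have h3 : (N + 1) / d = N / d + 1 := by rw [Nat.succ_div, if_pos h]
        calc N + 1 = d * ((N + 1) / d) := (Nat.mul_div_cancel' h).symm
          _ = d * (N / d + 1) := by rw [h3]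
      have h2' : ((N : ℝ) + 1) = d * ((N / d : ℕ) + 1) := by exact_mod_cast congrArg (Nat.cast : ℕ → ℝ) h2
      rw [h2', one_div_mul_one_div]
    · have h' : ¬ (d : ℤ) ∣ ((N : ℤ) + 1) := by
        intro hc; exact h (by exact_mod_cast hc)
      rw [if_neg h, if_neg h', add_zero, add_zero]

lemma bbw_harmonic_eq (k : ℕ) :
    ∑ i ∈ Finset.range k, (1 : ℝ) / (i + 1) = (harmonic k : ℝ) := by
  rw [harmonic]
  push_cast
  simp [one_div]


lemma bbw_div_tendsto (p : ℕ) (hp : 0 < p) :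
    Tendsto (fun N : ℕ => N / p) atTop atTop := by
  rw [tendsto_atTop_atTop]
  intro b
  refine ⟨b * p, fun a ha => ?_⟩
  calc b = b * p / p := by rw [Nat.mul_div_cancel _ hp]
    _ ≤ a / p := Nat.div_le_div_right ha

lemma bbw_phi_tendsto (p : ℕ) (hp : 1 < p) :
    Tendsto (fun M : ℕ => Real.log M - Real.log (M / p : ℕ) - Real.log p)
      atTop (𝓝 0) := by
  have hp0 : 0 < p := by omega
  have hpr : (0 : ℝ) < p := by exact_mod_cast hp0
  have hdiv := bbw_div_tendsto p hp0
  have hg : Tendsto (fun M : ℕ => Real.log (1 + 1 / ((M / p : ℕ) : ℝ))) atTop (𝓝 0) := by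
    have hx : Tendsto (fun x : ℝ => Real.log (1 + 1 / x)) atTop (𝓝 0) := by
      simpa only [add_zero, Real.log_one, id_eq] using
        ((tendsto_const_nhds.div_atTop tendsto_id).const_add 1).log (by norm_num)
    exact hx.comp (tendsto_natCast_atTop_atTop.comp hdiv)
  apply tendsto_of_tendsto_of_tendsto_of_le_of_le' tendsto_const_nhds hg
  · filter_upwards [hdiv.eventually_ge_atTop 1] with M hM
    have hq : (1 : ℝ) ≤ ((M / p : ℕ) : ℝ) := by exact_mod_cast hM
    have hMlb : (p : ℝ) * ((M / p : ℕ) : ℝ) ≤ (M : ℝ) := by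
      exact_mod_cast Nat.mul_div_le M p
    have := Real.log_le_log (by positivity) hMlb
    rw [Real.log_mul (by positivity) (by positivity)] at this
    linarith
  · filter_upwards [hdiv.eventually_ge_atTop 1] with M hM
    have hq : (1 : ℝ) ≤ ((M / p : ℕ) : ℝ) := by exact_mod_cast hM
    have hq0 : (0 : ℝ) < ((M / p : ℕ) : ℝ) := by linarith
    have hub : (M : ℝ) < (p : ℝ) * (((M / p : ℕ) : ℝ) + 1) := by
      have h1 : M < (M / p + 1) * p := (Nat.div_lt_iff_lt_mul hp0).mp (Nat.lt_succ_self _)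
      have h1' : (M : ℝ) < (((M / p : ℕ) : ℝ) + 1) * p := by exact_mod_cast h1
      linarith
    have hM1 : p ≤ M := (Nat.one_le_div_iff hp0).mp hM
    have hM0 : (0 : ℝ) < (M : ℝ) := by
      have : 0 < M := lt_of_lt_of_le hp0 hM1
      exact_mod_cast this
    have hlog := Real.log_le_log hM0 hub.le
    rw [Real.log_mul (by positivity) (by positivity)] at hlog
    have hratio : Real.log (((M / p : ℕ) : ℝ) + 1) - Real.log ((M / p : ℕ) : ℝ)
        = Real.log (1 + 1 / ((M / p : ℕ) : ℝ)) := by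
      rw [← Real.log_div (by positivity) hq0.ne', add_div, div_self hq0.ne']
    linarith

/-- For a prime `p`, the function `f(n) = 1 - 2p·[p ∣ n] + p²·[p² ∣ n]` is
`p²`-periodic, does not vanish on all residues `r` with `1 < gcd(r,p²) < p²`,
and satisfies `∑_{n=1}^∞ f(n)/n = 0`. -/
theorem bbw_condition_one_necessary (p : ℕ) (hp : p.Prime) (f : ℤ → ℤ)
    (hf : ∀ n : ℤ, f n = 1 - 2 * p * (if (p : ℤ) ∣ n then 1 else 0)
      + (p : ℤ) ^ 2 * (if ((p : ℤ)) ^ 2 ∣ n then 1 else 0)) :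
    (∀ n : ℤ, f (n + (p : ℤ) ^ 2) = f n) ∧
    (∃ r : ℤ, 1 < Int.gcd r (p ^ 2) ∧ Int.gcd r (p ^ 2) < p ^ 2 ∧ f r ≠ 0) ∧
    Tendsto (fun N : ℕ => ∑ n ∈ Finset.range N, (f (n + 1) : ℝ) / (n + 1))
      atTop (𝓝 0) := by
  have hp2 : 2 ≤ p := hp.two_le
  have hpp : (p : ℤ) ∣ (p : ℤ) ^ 2 := dvd_pow_self _ two_ne_zero
  refine ⟨?_, ?_, ?_⟩
  · intro n
    rw [hf, hf]
    have h1 : ((p : ℤ) ∣ n + (p : ℤ) ^ 2) ↔ (p : ℤ) ∣ n := by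
      constructor
      · intro h; simpa using h.sub hpp
      · intro h; exact h.add hpp
    have h2 : ((p : ℤ) ^ 2 ∣ n + (p : ℤ) ^ 2) ↔ (p : ℤ) ^ 2 ∣ n := by
      constructor
      · intro h; simpa using h.sub dvd_rfl
      · intro h; exact h.add dvd_rfl
    simp only [h1, h2]
  · refine ⟨(p : ℤ), ?_, ?_, ?_⟩
    all_goals try {
      rw [show ((p : ℤ)) ^ 2 = ((p ^ 2 : ℕ) : ℤ) by push_cast; ring,
        Int.gcd_natCast_natCast, Nat.gcd_eq_left (dvd_pow_self p two_ne_zero)]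
      nlinarith }
    · rw [hf]
      have hnd : ¬ ((p : ℤ) ^ 2 ∣ (p : ℤ)) := by
        intro h
        have := Int.le_of_dvd (by positivity) h
        nlinarith [this]
      rw [if_pos dvd_rfl, if_neg hnd]
      have : (2 : ℤ) ≤ (p : ℤ) := by exact_mod_cast hp2
      intro h
      omega
  · -- the analytic part
    have hp0 : 0 < p := by omega
    have hpr : (0 : ℝ) < p := by exact_mod_cast hp0
    have key : ∀ N : ℕ, (∑ n ∈ Finset.range N, (f (n + 1) : ℝ) / (n + 1))
        = (harmonic N : ℝ) - 2 * (harmonic (N / p) : ℝ) + (harmonic (N / p ^ 2) : ℝ) := by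
      intro N
      have e1 := bbw_aux_div_sum p N
      have e2 := bbw_aux_div_sum (p ^ 2) N
      simp only [Nat.cast_pow] at e2
      have trans : ∀ n ∈ Finset.range N, (f ((n : ℤ) + 1) : ℝ) / ((n : ℕ) + 1)
          = (1 : ℝ) / (n + 1)
            - (2 * (p : ℝ)) * (if (p : ℤ) ∣ ((n : ℤ) + 1) then (1 : ℝ) / (n + 1) else 0)
            + (p : ℝ) ^ 2 * (if ((p : ℤ)) ^ 2 ∣ ((n : ℤ) + 1) then (1 : ℝ) / (n + 1) else 0) := by
        intro n _
        rw [hf]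
        by_cases h1 : (p : ℤ) ∣ ((n : ℤ) + 1) <;> by_cases h2 : ((p : ℤ)) ^ 2 ∣ ((n : ℤ) + 1) <;>
          · simp only [h1, h2, if_true, if_false, mul_one, mul_zero, add_zero, sub_zero]
            push_cast
            ring
      rw [Finset.sum_congr rfl trans]
      rw [Finset.sum_add_distrib, Finset.sum_sub_distrib, ← Finset.mul_sum, ← Finset.mul_sum,
        e1, e2, ← bbw_harmonic_eq, ← bbw_harmonic_eq, ← bbw_harmonic_eq]
      have hpne : (p : ℝ) ≠ 0 := hpr.ne'
      field_simp
    rw [tendsto_congr key]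
    have hdiv : Tendsto (fun N : ℕ => N / p) atTop atTop := by
      rw [tendsto_atTop_atTop]
      intro b
      refine ⟨b * p, fun a ha => ?_⟩
      calc b = b * p / p := by rw [Nat.mul_div_cancel _ hp0]
        _ ≤ a / p := Nat.div_le_div_right ha
    have hphi : Tendsto (fun M : ℕ => Real.log M - Real.log (M / p : ℕ) - Real.log p)
        atTop (𝓝 0) := bbw_phi_tendsto p hp.one_lt
    have hE : Tendsto (fun n : ℕ => (harmonic n : ℝ) - Real.log n) atTop
        (𝓝 Real.eulerMascheroniConstant) := Real.tendsto_harmonic_sub_log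
    have hE1 := hE.comp hdiv
    have hE2 := (hE.comp hdiv).comp hdiv
    have hphi1 := hphi.comp hdiv
    have main := ((hE.sub (hE1.const_mul 2)).add hE2).add (hphi.sub hphi1)
    simp only [Function.comp] at main
    have : (Real.eulerMascheroniConstant - 2 * Real.eulerMascheroniConstant
        + Real.eulerMascheroniConstant) + ((0 : ℝ) - 0) = 0 := by ring
    rw [this] at main
    apply main.congr
    intro N
    have hdd : N / p / p = N / p ^ 2 := by
      rw [Nat.div_div_eq_div_mul, ← pow_two]
    rw [hdd]
    ring
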